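/- Let W be a nonzero restricted H_I-module of level 1 on which each p_i acts locally finitely (i.e., W belongs to the category F). Then there exists a nonzero vector w_0 ∈ W and a finitely supported function λ: I → ℂ such that p_i w_0 = λ_i w_0 for all i ∈ I; moreover the H_I-submodule generated by w_0 is isomorphic to M(1,λ). -/

import Mathlib

/-- A level-one module for the Heisenberg Lie algebra `H_I` with basis
`{p_i, q_i, k | i ∈ I}`, relations `[p_i, q_j] = δ_{ij} k`, all other brackets zero,
where the central element `k` acts as the identity. -/
structure HeisenbergRep (I : Type) (W : Type) [AddCommGroup W] [Module ℂ W] where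
  p : I → Module.End ℂ W
  q : I → Module.End ℂ W
  comm_pp : ∀ i j, Commute (p i) (p j)
  comm_qq : ∀ i j, Commute (q i) (q j)
  comm_pq_same : ∀ i, p i * q i - q i * p i = 1
  comm_pq_ne : ∀ i j, i ≠ j → Commute (p i) (q j)

namespace HeisenbergRep

variable {I : Type} {W : Type} [AddCommGroup W] [Module ℂ W]

/-- A submodule stable under all the Heisenberg operators. -/
def Stable (ρ : HeisenbergRep I W) (S : Submodule ℂ W) : Prop :=
  (∀ i, ∀ w ∈ S, ρ.p i w ∈ S) ∧ (∀ i, ∀ w ∈ S, ρ.q i w ∈ S)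

/-- `S` is a nonzero stable submodule with no proper nonzero stable submodule. -/
def IsSimpleSub (ρ : HeisenbergRep I W) (S : Submodule ℂ W) : Prop :=
  ρ.Stable S ∧ S ≠ ⊥ ∧ ∀ T : Submodule ℂ W, ρ.Stable T → T ≤ S → T = ⊥ ∨ T = S

/-- Irreducibility of the representation. -/
def IsIrreducible (ρ : HeisenbergRep I W) : Prop := ρ.IsSimpleSub ⊤

/-- Restricted: for each vector `w`, `p_i w = 0` for all but finitely many `i`. -/
def Restricted (ρ : HeisenbergRep I W) : Prop :=
  ∀ w : W, {i : I | ρ.p i w ≠ 0}.Finite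

/-- Isomorphism of Heisenberg representations. -/
def Iso {W' : Type} [AddCommGroup W'] [Module ℂ W']
    (ρ : HeisenbergRep I W) (ρ' : HeisenbergRep I W') : Prop :=
  ∃ e : W ≃ₗ[ℂ] W', (∀ i w, e (ρ.p i w) = ρ'.p i (e w)) ∧
    (∀ i w, e (ρ.q i w) = ρ'.q i (e w))

end HeisenbergRep

/-- An endomorphism is locally finite if every vector lies in a
finitely generated (equivalently, finite-dimensional) stable subspace. -/
def Module.End.LocallyFinite {W : Type} [AddCommGroup W] [Module ℂ W]
    (T : Module.End ℂ W) : Prop :=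
  ∀ w : W, ∃ S : Submodule ℂ W, w ∈ S ∧ S.FG ∧ ∀ v ∈ S, T v ∈ S

/-- An endomorphism is locally nilpotent if every vector is killed by some power. -/
def Module.End.LocallyNilpotent {W : Type} [AddCommGroup W] [Module ℂ W]
    (T : Module.End ℂ W) : Prop :=
  ∀ w : W, ∃ n : ℕ, (T ^ n) w = 0

/-- The category `F`: restricted level-one modules on which every `p_i` is locally finite. -/
def HeisenbergRep.InCategoryF {I W : Type} [AddCommGroup W] [Module ℂ W]
    (ρ : HeisenbergRep I W) : Prop :=
  ρ.Restricted ∧ ∀ i, (ρ.p i).LocallyFinite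

section M1

open MvPolynomial

variable {I : Type}

lemma pderiv_comm' [DecidableEq I] (i j : I) (f : MvPolynomial I ℂ) :
    pderiv i (pderiv j f) = pderiv j (pderiv i f) := by
  induction f using MvPolynomial.induction_on' with
  | monomial s a =>
      simp only [pderiv_monomial]
      by_cases hij : i = j
      · subst hij; rfl
      · have h1 : ((s - Finsupp.single j 1 : I →₀ ℕ)) i = s i := by
          rw [Finsupp.tsub_apply, Finsupp.single_eq_of_ne hij, tsub_zero]
        have h2 : ((s - Finsupp.single i 1 : I →₀ ℕ)) j = s j := by
          rw [Finsupp.tsub_apply, Finsupp.single_eq_of_ne (Ne.symm hij), tsub_zero]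
        rw [h1, h2, tsub_tsub, tsub_tsub, add_comm (Finsupp.single j 1)]
        ring_nf
  | add p q hp hq => simp [hp, hq]

/-- The module `M(1,λ) = e^{λx} ℂ[x_i | i ∈ I]`, modelled on the polynomial ring
(`e^{λx} f ↔ f`), with `p_i = ∂/∂x_i` (which becomes `∂/∂x_i + λ_i` on the polynomial
part), `q_i` multiplication by `x_i`, and `k = 1`. -/
noncomputable def M1rep [DecidableEq I] (lam : I →₀ ℂ) :
    HeisenbergRep I (MvPolynomial I ℂ) where
  p i := (pderiv i).toLinearMap + lam i • (1 : Module.End ℂ (MvPolynomial I ℂ))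
  q i := LinearMap.mulLeft ℂ (X i)
  comm_pp i j := by
    apply LinearMap.ext; intro f
    simp [Module.End.mul_apply, pderiv_comm' i j, smul_eq_C_mul]
    ring
  comm_qq i j := by
    apply LinearMap.ext; intro f
    simp [Module.End.mul_apply]
    ring
  comm_pq_same i := by
    apply LinearMap.ext; intro f
    simp [Module.End.mul_apply, pderiv_mul, smul_eq_C_mul]
    ring
  comm_pq_ne i j hij := by
    apply LinearMap.ext; intro f
    simp [Module.End.mul_apply, pderiv_mul, pderiv_X_of_ne (Ne.symm hij), smul_eq_C_mul]
    ring

end M1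


section Aux
open MvPolynomial

variable {I : Type} [DecidableEq I]

lemma coeff_pderiv_aux (i : I) (f : MvPolynomial I ℂ) (s : I →₀ ℕ) :
    coeff s (pderiv i f) = ((s i : ℂ) + 1) * coeff (s + Finsupp.single i 1) f := by
  induction f using MvPolynomial.induction_on' with
  | monomial t a =>
      rw [pderiv_monomial, coeff_monomial, coeff_monomial]
      by_cases ht : t = s + Finsupp.single i 1
      · subst ht
        have h1 : s + Finsupp.single i 1 - Finsupp.single i 1 = s := by simp
        have h2 : ((s + Finsupp.single i 1 : I →₀ ℕ)) i = s i + 1 := by simp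
        rw [if_pos h1, if_pos rfl, h2]
        push_cast
        ring
      · rw [if_neg ht, mul_zero]
        by_cases hts : t - Finsupp.single i 1 = s
        · have hti : t i = 0 := by
            by_contra h
            exact ht (by
              rw [← hts, tsub_add_cancel_of_le
                (Finsupp.single_le_iff.mpr (Nat.one_le_iff_ne_zero.mpr h))])
          rw [if_pos hts, hti]
          simp
        · rw [if_neg hts]
  | add p q hp hq => simp [hp, hq, mul_add]

lemma eq_C_of_pderiv_eq_zero' (f : MvPolynomial I ℂ) (h : ∀ i, pderiv i f = 0) :
    f = C (coeff 0 f) := by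
  ext s
  rw [coeff_C]
  by_cases hs : 0 = s
  · rw [if_pos hs, ← hs]
  · rw [if_neg hs]
    have hs' : s ≠ 0 := fun h' => hs h'.symm
    obtain ⟨i, hi⟩ : ∃ i, s i ≠ 0 := by
      by_contra hc
      push_neg at hc
      exact hs' (Finsupp.ext hc)
    have hle : Finsupp.single i 1 ≤ s :=
      Finsupp.single_le_iff.mpr (Nat.one_le_iff_ne_zero.mpr hi)
    have key := coeff_pderiv_aux i f (s - Finsupp.single i 1)
    rw [h i, tsub_add_cancel_of_le hle] at key
    simp only [coeff_zero] at key
    rcases mul_eq_zero.mp key.symm with h' | h'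
    · exact absurd h' (Nat.cast_add_one_ne_zero _)
    · exact h'

lemma totalDegree_pderiv_lt' (i : I) (f : MvPolynomial I ℂ) (h : pderiv i f ≠ 0) :
    (pderiv i f).totalDegree < f.totalDegree := by
  have key : ∀ s ∈ (pderiv i f).support, (s.sum fun _ e => e) + 1 ≤ f.totalDegree := by
    intro s hs
    rw [mem_support_iff, coeff_pderiv_aux] at hs
    have h2 : coeff (s + Finsupp.single i 1) f ≠ 0 := right_ne_zero_of_mul hs
    have h3 := le_totalDegree (mem_support_iff.mpr h2)
    calc (s.sum fun _ e => e) + 1 = ((s + Finsupp.single i 1).sum fun _ e => e) := by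
          rw [Finsupp.sum_add_index' (fun _ => rfl) (fun _ _ _ => rfl),
            Finsupp.sum_single_index rfl]
      _ ≤ _ := h3
  obtain ⟨s₀, hs₀⟩ := support_nonempty.mpr h
  have hpos : 0 < f.totalDegree := lt_of_lt_of_le (Nat.succ_pos _) (key s₀ hs₀)
  rw [totalDegree, Finset.sup_lt_iff hpos]
  exact fun s hs => Nat.lt_of_succ_le (key s hs)

end Aux

/-- Every nonzero `H_I`-module in the category `F` (restricted of level one, with every
`p_i` locally finite) contains a nonzero simultaneous eigenvector `w₀` for the `p_i`,
with finitely supported eigenvalue function `λ`; moreover the submodule generated by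
`w₀` is isomorphic to `M(1,λ)`. -/
theorem categoryF_eigenvector_and_M1_submodule
    {I W : Type} [DecidableEq I] [AddCommGroup W] [Module ℂ W]
    (ρ : HeisenbergRep I W) (hF : ρ.InCategoryF) (hW : ∃ w : W, w ≠ 0) :
    ∃ w₀ : W, w₀ ≠ 0 ∧ ∃ lam : I →₀ ℂ,
      (∀ i, ρ.p i w₀ = lam i • w₀) ∧
      ∃ e : MvPolynomial I ℂ →ₗ[ℂ] W, Function.Injective e ∧
        (∀ i f, e ((M1rep lam).p i f) = ρ.p i (e f)) ∧
        (∀ i f, e ((M1rep lam).q i f) = ρ.q i (e f)) ∧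
        LinearMap.range e = sInf {S : Submodule ℂ W | ρ.Stable S ∧ w₀ ∈ S} := by
  
  classical
  obtain ⟨hres, hlf⟩ := hF
  obtain ⟨w, hw⟩ := hW
  -- Step 1: a finite-dimensional subspace containing `w`, stable under finitely many `p j`
  have key : ∀ J : Finset I, ∀ U : Submodule ℂ W, U.FG →
      ∃ V : Submodule ℂ W, U ≤ V ∧ V.FG ∧ ∀ j ∈ J, ∀ v ∈ V, ρ.p j v ∈ V := by
    intro J
    induction J using Finset.induction_on with
    | empty => exact fun U hU => ⟨U, le_rfl, hU, by simp⟩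
    | @insert j J hjJ ih =>
      intro U hU
      obtain ⟨V, hUV, hVfg, hVst⟩ := ih U hU
      obtain ⟨sV, hsV⟩ := hVfg
      choose Sv hv1 hv2 hv3 using fun v : (sV : Set W) => hlf j (v : W)
      set T : Submodule ℂ W := ⨆ v : (sV : Set W), Sv v with hT
      have hVT : V ≤ T := by
        rw [← hsV, Submodule.span_le]
        intro x hx
        exact le_iSup Sv (⟨x, hx⟩ : (sV : Set W)) (hv1 ⟨x, hx⟩)
      have hTfg : T.FG := Submodule.fg_iSup _ fun v => hv2 v
      have hTst : Submodule.map (ρ.p j) T ≤ T := by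
        rw [hT, Submodule.map_iSup]
        refine iSup_mono fun v => ?_
        rintro _ ⟨x, hx, rfl⟩
        exact hv3 v x hx
      have hTstn : ∀ n : ℕ, Submodule.map (ρ.p j ^ n) T ≤ T := by
        intro n
        induction n with
        | zero => rw [pow_zero, Module.End.one_eq_id, Submodule.map_id]
        | succ n ihn =>
          calc Submodule.map (ρ.p j ^ (n + 1)) T
              = Submodule.map (ρ.p j ^ n) (Submodule.map (ρ.p j) T) := by
                rw [pow_succ, Module.End.mul_eq_comp, Submodule.map_comp]
            _ ≤ Submodule.map (ρ.p j ^ n) T := Submodule.map_mono hTst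
            _ ≤ T := ihn
      set V' : Submodule ℂ W := ⨆ n : ℕ, Submodule.map (ρ.p j ^ n) V with hV'
      have hVV' : V ≤ V' := by
        have h0 : Submodule.map (ρ.p j ^ 0) V = V := by
          rw [pow_zero, Module.End.one_eq_id, Submodule.map_id]
        exact h0 ▸ le_iSup (fun n : ℕ => Submodule.map (ρ.p j ^ n) V) 0
      have hV'T : V' ≤ T := iSup_le fun n => le_trans (Submodule.map_mono hVT) (hTstn n)
      have hV'fg : V'.FG := by
        haveI := (Submodule.fg_iff_finiteDimensional T).mp hTfg
        haveI := Submodule.finiteDimensional_of_le hV'T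
        exact (Submodule.fg_iff_finiteDimensional V').mpr inferInstance
      refine ⟨V', le_trans hUV hVV', hV'fg, ?_⟩
      intro k hk v hv
      rcases Finset.mem_insert.mp hk with rfl | hkJ
      · have hmap : Submodule.map (ρ.p k) V' ≤ V' := by
          rw [hV', Submodule.map_iSup]
          refine iSup_le fun n => ?_
          have heq : Submodule.map (ρ.p k) (Submodule.map (ρ.p k ^ n) V)
              = Submodule.map (ρ.p k ^ (n + 1)) V := by
            rw [pow_succ', Module.End.mul_eq_comp, Submodule.map_comp]
          rw [heq]
          exact le_iSup (fun n : ℕ => Submodule.map (ρ.p k ^ n) V) (n + 1)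
        exact hmap (Submodule.mem_map_of_mem hv)
      · have hmap : Submodule.map (ρ.p k) V' ≤ V' := by
          rw [hV', Submodule.map_iSup]
          refine iSup_le fun n => ?_
          have hc : ρ.p k * ρ.p j ^ n = ρ.p j ^ n * ρ.p k := ((ρ.comm_pp k j).pow_right n).eq
          calc Submodule.map (ρ.p k) (Submodule.map (ρ.p j ^ n) V)
              = Submodule.map (ρ.p k * ρ.p j ^ n) V := by
                rw [Module.End.mul_eq_comp, Submodule.map_comp]
            _ = Submodule.map (ρ.p j ^ n) (Submodule.map (ρ.p k) V) := by
                rw [hc, Module.End.mul_eq_comp, Submodule.map_comp]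
            _ ≤ Submodule.map (ρ.p j ^ n) V := by
                refine Submodule.map_mono ?_
                rintro _ ⟨x, hx, rfl⟩
                exact hVst k hkJ x hx
            _ ≤ V' := le_iSup (fun n : ℕ => Submodule.map (ρ.p j ^ n) V) n
        exact hmap (Submodule.mem_map_of_mem hv)
  set J : Finset I := (hres w).toFinset with hJ
  obtain ⟨V, hUV, hVfg, hVst⟩ := key J (Submodule.span ℂ {w}) (Submodule.fg_span_singleton w)
  set N : Submodule ℂ W := ⨅ i : {i : I // i ∉ J}, LinearMap.ker (ρ.p i) with hN
  have hmemN : ∀ v : W, v ∈ N ↔ ∀ i ∉ J, ρ.p i v = 0 := by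
    intro v
    simp [hN, Submodule.mem_iInf, LinearMap.mem_ker, Subtype.forall]
  have hwN : w ∈ N := by
    rw [hmemN]
    intro i hi
    by_contra h
    exact hi (by rw [hJ, Set.Finite.mem_toFinset]; exact h)
  have hNst : ∀ k : I, ∀ v ∈ N, ρ.p k v ∈ N := by
    intro k v hv
    rw [hmemN] at hv ⊢
    intro i hi
    have h2 : ρ.p i (ρ.p k v) = ρ.p k (ρ.p i v) := by
      have hce := (ρ.comm_pp i k).eq
      calc ρ.p i (ρ.p k v) = (ρ.p i * ρ.p k) v := rfl
        _ = (ρ.p k * ρ.p i) v := by rw [hce]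
        _ = ρ.p k (ρ.p i v) := rfl
    rw [h2, hv i hi, map_zero]
  set V₂ : Submodule ℂ W := V ⊓ N with hV₂
  have hwV₂ : w ∈ V₂ := ⟨hUV (Submodule.mem_span_singleton_self w), hwN⟩
  have hV₂fg : V₂.FG := by
    haveI := (Submodule.fg_iff_finiteDimensional V).mp hVfg
    haveI : FiniteDimensional ℂ V₂ := Submodule.finiteDimensional_of_le inf_le_left
    exact (Submodule.fg_iff_finiteDimensional V₂).mpr inferInstance
  have hV₂st : ∀ j ∈ J, ∀ v ∈ V₂, ρ.p j v ∈ V₂ :=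
    fun j hj v hv => ⟨hVst j hj v hv.1, hNst j v hv.2⟩
  have hV₂ne : V₂ ≠ ⊥ := (Submodule.ne_bot_iff V₂).mpr ⟨w, hwV₂, hw⟩
  -- Step 2: common eigenvector
  have claim2 : ∀ K : Finset I, ∀ V' : Submodule ℂ W, V' ≠ ⊥ → V'.FG →
      (∀ j ∈ K, ∀ v ∈ V', ρ.p j v ∈ V') →
      ∃ w₀ ∈ V', w₀ ≠ 0 ∧ ∀ j ∈ K, ∃ c : ℂ, ρ.p j w₀ = c • w₀ := by
    intro K
    induction K using Finset.induction_on with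
    | empty =>
      intro V' hne _ _
      obtain ⟨x, hx, hx0⟩ := (Submodule.ne_bot_iff V').mp hne
      exact ⟨x, hx, hx0, by simp⟩
    | @insert j K hjK ih =>
      intro V' hne hfg hst
      haveI : FiniteDimensional ℂ V' := (Submodule.fg_iff_finiteDimensional V').mp hfg
      haveI : Nontrivial V' := Submodule.nontrivial_iff_ne_bot.mpr hne
      have hstj : ∀ v ∈ V', ρ.p j v ∈ V' := hst j (Finset.mem_insert_self j K)
      obtain ⟨c, hc⟩ := Module.End.exists_eigenvalue ((ρ.p j).restrict hstj)
      obtain ⟨v, hv⟩ := hc.exists_hasEigenvector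
      have hv0 : (v : W) ≠ 0 := fun h => hv.2 (Subtype.ext h)
      have hveq : ρ.p j (v : W) = c • (v : W) := by
        have h1 := Module.End.mem_eigenspace_iff.mp hv.1
        have h2 := congrArg (Subtype.val) h1
        simpa [LinearMap.restrict_coe_apply] using h2
      set E : Submodule ℂ W := V' ⊓ LinearMap.ker (ρ.p j - c • LinearMap.id) with hE
      have hmemE : ∀ x : W, x ∈ E ↔ x ∈ V' ∧ ρ.p j x = c • x := by
        intro x
        simp [hE, LinearMap.mem_ker, sub_eq_zero, LinearMap.sub_apply, LinearMap.smul_apply,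
          LinearMap.id_apply]
      have hEne : E ≠ ⊥ := (Submodule.ne_bot_iff E).mpr ⟨v, (hmemE v).mpr ⟨v.2, hveq⟩, hv0⟩
      have hEfg : E.FG := by
        haveI : FiniteDimensional ℂ E := Submodule.finiteDimensional_of_le inf_le_left
        exact (Submodule.fg_iff_finiteDimensional E).mpr inferInstance
      have hEst : ∀ k ∈ K, ∀ x ∈ E, ρ.p k x ∈ E := by
        intro k hk x hx
        rw [hmemE] at hx ⊢
        refine ⟨hst k (Finset.mem_insert_of_mem hk) x hx.1, ?_⟩
        have h2 : ρ.p j (ρ.p k x) = ρ.p k (ρ.p j x) := by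
          have hce := (ρ.comm_pp j k).eq
          calc ρ.p j (ρ.p k x) = (ρ.p j * ρ.p k) x := rfl
            _ = (ρ.p k * ρ.p j) x := by rw [hce]
            _ = ρ.p k (ρ.p j x) := rfl
        rw [h2, hx.2, map_smul]
      obtain ⟨w₀, hw₀E, hw₀0, hw₀eig⟩ := ih E hEne hEfg hEst
      refine ⟨w₀, ((hmemE w₀).mp hw₀E).1, hw₀0, ?_⟩
      intro k hk
      rcases Finset.mem_insert.mp hk with rfl | hkK
      · exact ⟨c, ((hmemE w₀).mp hw₀E).2⟩
      · exact hw₀eig k hkK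
  obtain ⟨w₀, hw₀V₂, hw₀0, hw₀eig⟩ := claim2 J V₂ hV₂ne hV₂fg hV₂st
  have hzero : ∀ i ∉ J, ρ.p i w₀ = 0 := fun i hi => (hmemN w₀).mp hw₀V₂.2 i hi
  set g : I → ℂ := fun i => if h : i ∈ J then Classical.choose (hw₀eig i h) else 0 with hgdef
  have hg : ∀ i, ρ.p i w₀ = g i • w₀ := by
    intro i
    by_cases h : i ∈ J
    · rw [hgdef]
      simp only [dif_pos h]
      exact Classical.choose_spec (hw₀eig i h)
    · rw [hgdef]
      simp only [dif_neg h, zero_smul]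
      exact hzero i h
  have hgfin : (Function.support g).Finite := by
    refine Set.Finite.subset J.finite_toSet ?_
    intro i hi
    by_contra h
    have h' : i ∉ J := fun hmem => h (Finset.mem_coe.mpr hmem)
    exact hi (by rw [hgdef]; simp [dif_neg h'])
  set lam : I →₀ ℂ := Finsupp.ofSupportFinite g hgfin with hlamdef
  have hlam : ∀ i, lam i = g i := fun i => rfl
  -- Step 3: the map e
  have hcommq : ∀ a ∈ Set.range ρ.q, ∀ b ∈ Set.range ρ.q, a * b = b * a := by
    rintro _ ⟨i, rfl⟩ _ ⟨k, rfl⟩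
    exact (ρ.comm_qq i k).eq
  letI : CommRing ↥(Algebra.adjoin ℂ (Set.range ρ.q)) := Algebra.adjoinCommRingOfComm ℂ hcommq
  set qA : I → ↥(Algebra.adjoin ℂ (Set.range ρ.q)) :=
    fun i => ⟨ρ.q i, Algebra.subset_adjoin ⟨i, rfl⟩⟩ with hqA
  set Φ : MvPolynomial I ℂ →ₐ[ℂ] ↥(Algebra.adjoin ℂ (Set.range ρ.q)) :=
    MvPolynomial.aeval qA with hΦ
  set e : MvPolynomial I ℂ →ₗ[ℂ] W :=
    { toFun := fun f => ((Φ f : Module.End ℂ W)) w₀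
      map_add' := fun f g' => by
        simp only [map_add, Subalgebra.coe_add, LinearMap.add_apply]
      map_smul' := fun a f => by
        simp only [map_smul, Subalgebra.coe_smul, LinearMap.smul_apply, RingHom.id_apply] } with he
  have heapp : ∀ f : MvPolynomial I ℂ, e f = ((Φ f : Module.End ℂ W)) w₀ := fun f => rfl
  have heC : ∀ a : ℂ, e (MvPolynomial.C a) = a • w₀ := by
    intro a
    rw [heapp, hΦ]
    simp only [MvPolynomial.aeval_C]
    rw [Subalgebra.coe_algebraMap]
    exact Module.algebraMap_end_apply ℂ ℂ W a w₀
  have heX : ∀ (i : I) (f : MvPolynomial I ℂ), e (MvPolynomial.X i * f) = ρ.q i (e f) := by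
    intro i f
    rw [heapp, heapp, map_mul]
    have hXi : Φ (MvPolynomial.X i) = qA i := by rw [hΦ]; simp
    rw [hXi]
    rw [MulMemClass.coe_mul]
    rfl
  have hpq_same : ∀ (i : I) (v : W), ρ.p i (ρ.q i v) = ρ.q i (ρ.p i v) + v := by
    intro i v
    have h1 : (ρ.p i * ρ.q i - ρ.q i * ρ.p i) v = (1 : Module.End ℂ W) v := by
      rw [ρ.comm_pq_same i]
    have h2 : ρ.p i (ρ.q i v) = v + ρ.q i (ρ.p i v) := by
      simpa [LinearMap.sub_apply, Module.End.mul_apply, sub_eq_iff_eq_add] using h1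
    rw [h2, add_comm]
  have hpq_ne : ∀ (i k : I), i ≠ k → ∀ v : W, ρ.p i (ρ.q k v) = ρ.q k (ρ.p i v) := by
    intro i k hik v
    have h1 : (ρ.p i * ρ.q k) v = (ρ.q k * ρ.p i) v := by rw [(ρ.comm_pq_ne i k hik).eq]
    simpa [Module.End.mul_apply] using h1
  have hep : ∀ (i : I) (f : MvPolynomial I ℂ),
      ρ.p i (e f) = e (MvPolynomial.pderiv i f) + lam i • e f := by
    intro i f
    induction f using MvPolynomial.induction_on with
    | C a =>
      rw [heC, MvPolynomial.pderiv_C, map_zero, map_smul, hg i, zero_add]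
      rw [hlam i, smul_comm]
    | add f f' hf hf' =>
      rw [map_add, map_add, map_add, hf, hf', map_add, smul_add]
      abel
    | mul_X f j hf =>
      rw [mul_comm f (MvPolynomial.X j)]
      by_cases hij : i = j
      · subst hij
        rw [heX, hpq_same, hf]
        have hpd : MvPolynomial.pderiv i (MvPolynomial.X i * f)
            = MvPolynomial.X i * MvPolynomial.pderiv i f + f := by
          rw [MvPolynomial.pderiv_mul, MvPolynomial.pderiv_X_self]
          ring
        simp only [hpd, map_add, map_smul, heX, smul_add]
        abel
      · rw [heX, hpq_ne i j hij, hf]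
        have hpd : MvPolynomial.pderiv i (MvPolynomial.X j * f)
            = MvPolynomial.X j * MvPolynomial.pderiv i f := by
          rw [MvPolynomial.pderiv_mul, MvPolynomial.pderiv_X_of_ne (Ne.symm hij)]
          ring
        simp only [hpd, map_add, map_smul, heX]
  have hM1p : ∀ (i : I) (f : MvPolynomial I ℂ),
      (M1rep lam).p i f = MvPolynomial.pderiv i f + lam i • f := by
    intro i f
    simp [M1rep]
  have hM1q : ∀ (i : I) (f : MvPolynomial I ℂ),
      (M1rep lam).q i f = MvPolynomial.X i * f := by
    intro i f
    simp [M1rep]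
  have hpint : ∀ (i : I) (f : MvPolynomial I ℂ), e ((M1rep lam).p i f) = ρ.p i (e f) := by
    intro i f
    rw [hM1p, map_add, map_smul, hep]
  have hqint : ∀ (i : I) (f : MvPolynomial I ℂ), e ((M1rep lam).q i f) = ρ.q i (e f) := by
    intro i f
    rw [hM1q, heX]
  have hinj : Function.Injective e := by
    have hmain : ∀ n : ℕ, ∀ f : MvPolynomial I ℂ, e f = 0 → f.totalDegree ≤ n → f = 0 := by
      intro n
      induction n using Nat.strong_induction_on with
      | _ n ihn =>
        intro f hf hdeg
        have hder : ∀ i, MvPolynomial.pderiv i f = 0 := by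
          intro i
          by_contra hne
          have hlt := totalDegree_pderiv_lt' i f hne
          have h0 : e (MvPolynomial.pderiv i f) = 0 := by
            have h1 := hep i f
            rw [hf, map_zero, smul_zero, add_zero] at h1
            exact h1.symm
          exact hne (ihn (MvPolynomial.pderiv i f).totalDegree (lt_of_lt_of_le hlt hdeg) _ h0
            le_rfl)
        have hC := eq_C_of_pderiv_eq_zero' f hder
        have hc0 : MvPolynomial.coeff 0 f = 0 := by
          have h1 := heC (MvPolynomial.coeff 0 f)
          rw [← hC, hf] at h1
          rcases smul_eq_zero.mp h1.symm with h' | h'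
          · exact h'
          · exact absurd h' hw₀0
        rw [hC, hc0, map_zero]
    rw [← LinearMap.ker_eq_bot]
    exact (Submodule.eq_bot_iff _).mpr fun f hf => hmain f.totalDegree f hf le_rfl
  have he1 : e 1 = w₀ := by
    have h1 := heC 1
    rw [map_one, one_smul] at h1
    exact h1
  refine ⟨w₀, hw₀0, lam, fun i => by rw [hlam i]; exact hg i, e, hinj, hpint, hqint, ?_⟩
  apply le_antisymm
  · refine le_sInf ?_
    rintro S ⟨⟨hSp, hSq⟩, hSw⟩
    rintro x ⟨f, rfl⟩
    induction f using MvPolynomial.induction_on with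
    | C a =>
      rw [heC]
      exact S.smul_mem a hSw
    | add f f' hf hf' =>
      rw [map_add]
      exact S.add_mem hf hf'
    | mul_X f j hf =>
      rw [mul_comm f (MvPolynomial.X j), heX]
      exact hSq j _ hf
  · refine sInf_le ⟨⟨?_, ?_⟩, ⟨1, he1⟩⟩
    · rintro i _ ⟨f, rfl⟩
      exact ⟨(M1rep lam).p i f, hpint i f⟩
    · rintro i _ ⟨f, rfl⟩
      exact ⟨(M1rep lam).q i f, hqint i f⟩
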